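/- An LDUI matrix X parametrized by (A,C) (i.e. X = Σ_{i,j} A_{ij}|ij⟩⟨ij| + Σ_{i≠j} C_{ij}|ij⟩⟨ji|) is unitary if and only if: (i) A_{ii} = C_{ii} and |A_{ii}| = 1 for all i; (ii) for all i < j there exists ω_{ij} with |ω_{ij}|=1 such that A_{ji} = ω_{ij}·conj(A_{ij}) and C_{ji} = −ω_{ij}·conj(C_{ij}); and (iii) |A_{ij}|² + |C_{ij}|² = 1 for all i < j. -/

import Mathlib

open Matrix

/-- The LDOI matrix `X^{(3)}_{(A,B,C)} = Σ_{i,j} A_{ij}|ij⟩⟨ij| + Σ_{i≠j} B_{ij}|ii⟩⟨jj|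
  + Σ_{i≠j} C_{ij}|ij⟩⟨ji|`. -/
def X3 {d : ℕ} {R : Type*} [CommRing R] (A B C : Matrix (Fin d) (Fin d) R) :
    Matrix (Fin d × Fin d) (Fin d × Fin d) R :=
  Matrix.of fun p q =>
    (if p.1 = q.1 ∧ p.2 = q.2 then A p.1 p.2 else 0) +
    (if p.1 = p.2 ∧ q.1 = q.2 ∧ p.1 ≠ q.1 then B p.1 q.1 else 0) +
    (if p.1 = q.2 ∧ p.2 = q.1 ∧ p.1 ≠ p.2 then C p.1 p.2 else 0)

/-- The realignment `(X^R)_{ij,kl} = X_{ik,jl}`. -/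
def realign {d : ℕ} {R : Type*} [CommRing R]
    (X : Matrix (Fin d × Fin d) (Fin d × Fin d) R) :
    Matrix (Fin d × Fin d) (Fin d × Fin d) R :=
  Matrix.of fun p q => X (p.1, q.1) (p.2, q.2)

/-- The partial transpose `(X^Γ)_{ij,kl} = X_{il,kj}`. -/
def ptrans {d : ℕ} {R : Type*} [CommRing R]
    (X : Matrix (Fin d × Fin d) (Fin d × Fin d) R) :
    Matrix (Fin d × Fin d) (Fin d × Fin d) R :=
  Matrix.of fun p q => X (p.1, q.2) (q.1, p.2)

/-- The triple (A,B,C) has equal diagonals. -/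
def EqDiag {d : ℕ} {R : Type*} [CommRing R] (A B C : Matrix (Fin d) (Fin d) R) : Prop :=
  ∀ i, A i i = B i i ∧ B i i = C i i

lemma sum_two {α : Type*} [Fintype α] [DecidableEq α] (f : α → ℂ) (a b : α)
    (h : ∀ p, p ≠ a → p ≠ b → f p = 0) :
    ∑ p, f p = if a = b then f a else f a + f b := by
  have hs : ∑ p, f p = ∑ p ∈ ({a, b} : Finset α), f p := by
    refine (Finset.sum_subset (Finset.subset_univ _) fun x _ hx => ?_).symm
    simp only [Finset.mem_insert, Finset.mem_singleton, not_or] at hx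
    exact h x hx.1 hx.2
  rw [hs]
  by_cases hab : a = b
  · subst hab; simp
  · simp [Finset.sum_pair hab, hab]

lemma X1_apply {d : ℕ} (A C : Matrix (Fin d) (Fin d) ℂ) (p q : Fin d × Fin d) :
    X3 A (Matrix.diagonal fun i => A i i) C p q =
      (if p = q then A p.1 p.2 else 0) +
      (if p.1 = q.2 ∧ p.2 = q.1 ∧ p.1 ≠ p.2 then C p.1 p.2 else 0) := by
  simp only [X3, Matrix.of_apply]
  have h2 : (if p.1 = p.2 ∧ q.1 = q.2 ∧ p.1 ≠ q.1 then
      Matrix.diagonal (fun i => A i i) p.1 q.1 else 0) = 0 := by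
    split_ifs with h
    · exact Matrix.diagonal_apply_ne _ h.2.2
    · rfl
  rw [h2, add_zero]
  congr 1
  simp [Prod.ext_iff]

/-- unitarity characterization of LDUI matrices `X^{(1)}_{(A,C)}`
(the LDOI matrix with `B = diag(A)`). -/
theorem stmt_7 {d : ℕ} (A C : Matrix (Fin d) (Fin d) ℂ)
    (hdiag : ∀ i, A i i = C i i) :
    X3 A (Matrix.diagonal fun i => A i i) C ∈ Matrix.unitaryGroup (Fin d × Fin d) ℂ ↔
      ((∀ i, ‖A i i‖ = 1) ∧
       (∀ i j : Fin d, i < j → ∃ ω : ℂ, ‖ω‖ = 1 ∧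
          A j i = ω * starRingEnd ℂ (A i j) ∧
          C j i = -(ω * starRingEnd ℂ (C i j))) ∧
       (∀ i j : Fin d, i < j →
          ‖A i j‖ ^ 2 + ‖C i j‖ ^ 2 = 1)) := by
  set X := X3 A (Matrix.diagonal fun i => A i i) C with hXdef
  have hrow : ∀ (a p : Fin d × Fin d), p ≠ a → p ≠ (a.2, a.1) → X a p = 0 := by
    intro a p h1 h2
    rw [hXdef, X1_apply, if_neg (fun hx => h1 hx.symm), if_neg, add_zero]
    rintro ⟨hx, hy, -⟩
    exact h2 (Prod.ext hy.symm hx.symm)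
  have hcol : ∀ (a p : Fin d × Fin d), p ≠ a → p ≠ (a.2, a.1) → X p a = 0 := by
    intro a p h1 h2
    rw [hXdef, X1_apply, if_neg h1, if_neg, add_zero]
    rintro ⟨hx, hy, -⟩
    exact h2 (Prod.ext hx hy)
  constructor
  · intro hU
    have h1 : X * star X = 1 := Matrix.mem_unitaryGroup_iff.mp hU
    have h2 : star X * X = 1 := Matrix.mem_unitaryGroup_iff'.mp hU
    have e1 : ∀ a b : Fin d × Fin d,
        (if a = (a.2, a.1) then X a a * (starRingEnd ℂ) (X b a)
         else X a a * (starRingEnd ℂ) (X b a) +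
           X a (a.2, a.1) * (starRingEnd ℂ) (X b (a.2, a.1)))
          = if a = b then 1 else 0 := by
      intro a b
      have h := Matrix.ext_iff.mpr h1 a b
      rw [Matrix.mul_apply] at h
      simp only [Matrix.star_apply, Complex.star_def, Matrix.one_apply] at h
      rwa [sum_two _ a (a.2, a.1)
        (fun p hp1 hp2 => by rw [hrow a p hp1 hp2, zero_mul])] at h
    have e2 : ∀ a b : Fin d × Fin d,
        (if a = (a.2, a.1) then (starRingEnd ℂ) (X a a) * X a b
         else (starRingEnd ℂ) (X a a) * X a b +
           (starRingEnd ℂ) (X (a.2, a.1) a) * X (a.2, a.1) b)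
          = if a = b then 1 else 0 := by
      intro a b
      have h := Matrix.ext_iff.mpr h2 a b
      rw [Matrix.mul_apply] at h
      simp only [Matrix.star_apply, Complex.star_def, Matrix.one_apply] at h
      rwa [sum_two _ a (a.2, a.1)
        (fun p hp1 hp2 => by rw [hcol a p hp1 hp2, map_zero, zero_mul])] at h
    have key1' : ∀ i : Fin d, Complex.normSq (A i i) = 1 := by
      intro i
      have h := e1 (i, i) (i, i)
      have eA : X (i, i) (i, i) = A i i := by simp [hXdef, X1_apply]
      rw [eA, if_pos rfl, if_pos rfl, Complex.mul_conj] at h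
      exact_mod_cast h
    have keyr : ∀ i j : Fin d, i ≠ j →
        Complex.normSq (A i j) + Complex.normSq (C i j) = 1 := by
      intro i j hij
      have h := e1 (i, j) (i, j)
      rw [if_neg (by simp [Prod.ext_iff, hij]), if_pos rfl] at h
      have eA : X (i, j) (i, j) = A i j := by simp [hXdef, X1_apply, hij]
      have eC : X (i, j) (j, i) = C i j := by simp [hXdef, X1_apply, Prod.ext_iff, hij]
      rw [eA, eC, Complex.mul_conj, Complex.mul_conj] at h
      exact_mod_cast h
    have keyc : ∀ i j : Fin d, i ≠ j →
        Complex.normSq (A i j) + Complex.normSq (C j i) = 1 := by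
      intro i j hij
      have h := e2 (i, j) (i, j)
      rw [if_neg (by simp [Prod.ext_iff, hij]), if_pos rfl] at h
      have eA : X (i, j) (i, j) = A i j := by simp [hXdef, X1_apply, hij]
      have eC : X (j, i) (i, j) = C j i := by
        simp [hXdef, X1_apply, Prod.ext_iff, hij, Ne.symm hij]
      rw [eA, eC, mul_comm ((starRingEnd ℂ) (A i j)), mul_comm ((starRingEnd ℂ) (C j i)),
        Complex.mul_conj, Complex.mul_conj] at h
      exact_mod_cast h
    have keyo : ∀ i j : Fin d, i ≠ j →
        A i j * (starRingEnd ℂ) (C j i) + C i j * (starRingEnd ℂ) (A j i) = 0 := by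
      intro i j hij
      have h := e1 (i, j) (j, i)
      rw [if_neg (by simp [Prod.ext_iff, hij]), if_neg (by simp [Prod.ext_iff, hij])] at h
      have eA : X (i, j) (i, j) = A i j := by simp [hXdef, X1_apply, hij]
      have eC : X (i, j) (j, i) = C i j := by simp [hXdef, X1_apply, Prod.ext_iff, hij]
      have eC' : X (j, i) (i, j) = C j i := by
        simp [hXdef, X1_apply, Prod.ext_iff, hij, Ne.symm hij]
      have eA' : X (j, i) (j, i) = A j i := by simp [hXdef, X1_apply, Ne.symm hij]
      rwa [eA, eC, eC', eA'] at h
    have hAsm : ∀ i j : Fin d, i ≠ j →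
        Complex.normSq (A j i) = Complex.normSq (A i j) := by
      intro i j hij
      have a := keyr j i hij.symm
      have b := keyc i j hij
      linarith
    have hCsm : ∀ i j : Fin d, i ≠ j →
        Complex.normSq (C j i) = Complex.normSq (C i j) := by
      intro i j hij
      have a := keyr i j hij
      have b := keyc i j hij
      linarith
    refine ⟨?_, ?_, ?_⟩
    · intro i
      rw [Complex.norm_def, key1' i, Real.sqrt_one]
    · intro i j hlt
      have hij : i ≠ j := ne_of_lt hlt
      by_cases hA0 : A i j = 0
      · have hAji : A j i = 0 := by
          have h := hAsm i j hij
          rw [hA0] at h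
          simpa [Complex.normSq_eq_zero] using h
        have hCn : Complex.normSq (C i j) = 1 := by
          have h := keyr i j hij
          rw [hA0] at h
          simpa using h
        have hC0 : C i j ≠ 0 := by
          intro h; rw [h] at hCn; simp at hCn
        have habsC : ‖C j i‖ = ‖C i j‖ := by
          rw [Complex.norm_def, Complex.norm_def, hCsm i j hij]
        have hconjC : (starRingEnd ℂ) (C i j) ≠ 0 := by simpa using hC0
        refine ⟨-(C j i / (starRingEnd ℂ) (C i j)), ?_, ?_, ?_⟩
        · rw [norm_neg, norm_div, Complex.norm_conj, habsC,
            div_self (norm_ne_zero_iff.mpr hC0)]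
        · simp [hAji, hA0]
        · rw [neg_mul, neg_neg, div_mul_cancel₀ _ hconjC]
      · have habsA : ‖A j i‖ = ‖A i j‖ := by
          rw [Complex.norm_def, Complex.norm_def, hAsm i j hij]
        have hconjA : (starRingEnd ℂ) (A i j) ≠ 0 := by simpa using hA0
        refine ⟨A j i / (starRingEnd ℂ) (A i j), ?_, ?_, ?_⟩
        · rw [norm_div, Complex.norm_conj, habsA, div_self (norm_ne_zero_iff.mpr hA0)]
        · rw [div_mul_cancel₀ _ hconjA]
        · have h := congrArg (starRingEnd ℂ) (keyo i j hij)
          simp only [map_add, _root_.map_mul, Complex.conj_conj, map_zero] at h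
          field_simp
          linear_combination h
    · intro i j hlt
      rw [Complex.sq_norm, Complex.sq_norm]
      exact keyr i j (ne_of_lt hlt)
  · rintro ⟨hdA, hω, hn⟩
    have hsym : ∀ i j : Fin d, i ≠ j → ∃ ω : ℂ,
        A j i = ω * (starRingEnd ℂ) (A i j) ∧
        C j i = -(ω * (starRingEnd ℂ) (C i j)) ∧
        Complex.normSq (A i j) + Complex.normSq (C i j) = 1 := by
      intro i j hij
      rcases hij.lt_or_gt with h | h
      · obtain ⟨ω, hω1, hA, hC⟩ := hω i j h
        refine ⟨ω, hA, hC, ?_⟩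
        have hh := hn i j h
        rwa [Complex.sq_norm, Complex.sq_norm] at hh
      · obtain ⟨ω, hω1, hA, hC⟩ := hω j i h
        have hω2 : Complex.normSq ω = 1 := by
          rw [Complex.normSq_eq_norm_sq, hω1, one_pow]
        have hωω : ω * (starRingEnd ℂ) ω = 1 := by
          rw [Complex.mul_conj, hω2]; norm_num
        have hA' := congrArg (starRingEnd ℂ) hA
        simp only [_root_.map_mul, Complex.conj_conj] at hA'
        have hC' := congrArg (starRingEnd ℂ) hC
        simp only [map_neg, _root_.map_mul, Complex.conj_conj] at hC'
        refine ⟨ω, ?_, ?_, ?_⟩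
        · calc A j i = (ω * (starRingEnd ℂ) ω) * A j i := by rw [hωω, one_mul]
            _ = ω * (starRingEnd ℂ) (A i j) := by rw [hA']; ring
        · calc C j i = (ω * (starRingEnd ℂ) ω) * C j i := by rw [hωω, one_mul]
            _ = -(ω * (starRingEnd ℂ) (C i j)) := by rw [hC']; ring
        · have h1 := hn j i h
          rw [Complex.sq_norm, Complex.sq_norm] at h1
          rw [hA, hC]
          simp only [Complex.normSq_neg, Complex.normSq_mul, Complex.normSq_conj,
            hω2, one_mul]
          linarith
    rw [Matrix.mem_unitaryGroup_iff]
    ext ⟨i, j⟩ ⟨k, l⟩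
    rw [Matrix.mul_apply]
    simp only [Matrix.star_apply, Complex.star_def]
    rw [sum_two _ (i, j) (j, i)
      (fun p hp1 hp2 => by rw [hrow (i, j) p hp1 hp2, zero_mul]), Matrix.one_apply]
    by_cases hij : i = j
    · subst hij
      rw [if_pos rfl]
      by_cases hkl : (k, l) = (i, i)
      · rw [hkl, if_pos rfl]
        have eA : X (i, i) (i, i) = A i i := by simp [hXdef, X1_apply]
        rw [eA, Complex.mul_conj]
        have : Complex.normSq (A i i) = 1 := by
          rw [Complex.normSq_eq_norm_sq, hdA i, one_pow]
        rw [this]; norm_num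
      · rw [if_neg (fun h => hkl h.symm)]
        have hz : X (k, l) (i, i) = 0 := by
          rw [hXdef, X1_apply, if_neg hkl, if_neg, add_zero]
          rintro ⟨ha, hb, hc⟩
          exact hc (ha.trans hb.symm)
        rw [hz, map_zero, mul_zero]
    · rw [if_neg (by simp [Prod.ext_iff, hij])]
      obtain ⟨ω, hA, hC, hnrm⟩ := hsym i j hij
      have eA : X (i, j) (i, j) = A i j := by simp [hXdef, X1_apply, hij]
      have eC : X (i, j) (j, i) = C i j := by simp [hXdef, X1_apply, Prod.ext_iff, hij]
      rw [eA, eC]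
      by_cases hkl1 : (k, l) = (i, j)
      · rw [hkl1, if_pos rfl, eA, eC, Complex.mul_conj, Complex.mul_conj]
        exact_mod_cast hnrm
      · by_cases hkl2 : (k, l) = (j, i)
        · rw [hkl2, if_neg (by simp [Prod.ext_iff, hij])]
          have eC' : X (j, i) (i, j) = C j i := by
            simp [hXdef, X1_apply, Prod.ext_iff, hij, Ne.symm hij]
          have eA' : X (j, i) (j, i) = A j i := by simp [hXdef, X1_apply, Ne.symm hij]
          rw [eC', eA', hA, hC]
          simp only [map_neg, _root_.map_mul, Complex.conj_conj]
          ring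
        · have z1 : X (k, l) (i, j) = 0 := hcol (i, j) (k, l) hkl1 hkl2
          have z2 : X (k, l) (j, i) = 0 := hcol (j, i) (k, l) hkl2 hkl1
          rw [z1, z2, if_neg (fun h => hkl1 h.symm)]
          simp
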